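/- Suppose the ideals of an ordered group G satisfy the descending chain condition, and let I be a proper ideal of G. Then either I = J₁ ∩ J₂ for ideals J₁, J₂ both properly containing I, or there exists a unique ideal I′ properly containing I that is contained in every ideal properly containing I. -/

import Mathlib

/-- An ideal of an ordered abelian group: an order-convex directed subgroup. -/
def IsOrderIdeal {G : Type*} [AddCommGroup G] [PartialOrder G] (H : AddSubgroup G) : Prop :=
  (∀ g h x : G, g ∈ H → h ∈ H → g ≤ x → x ≤ h → x ∈ H) ∧
  (∀ x ∈ H, ∃ a ∈ H, ∃ b ∈ H, 0 ≤ a ∧ 0 ≤ b ∧ x = a - b)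

/-- If the ideals of an ordered abelian group satisfy the descending chain
condition (and intersections of nonempty families of ideals containing a given
ideal are ideals), then any proper ideal `I` either is the proper intersection
of two ideals, or has a unique minimum properly containing ideal `I′`. -/
theorem stmt10 {G : Type*} [AddCommGroup G] [PartialOrder G]
    (hadd : ∀ g h x : G, g ≤ h → g + x ≤ h + x)
    (hdir : ∀ g h : G, ∃ y : G, g ≤ y ∧ h ≤ y)
    (hInf : ∀ (𝒥 : Set (AddSubgroup G)) (K : AddSubgroup G), IsOrderIdeal K →
      𝒥.Nonempty → (∀ J ∈ 𝒥, IsOrderIdeal J ∧ K ≤ J) → IsOrderIdeal (sInf 𝒥))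
    (hDCC : ∀ f : ℕ → AddSubgroup G, (∀ i, IsOrderIdeal (f i)) →
      (∀ i, f (i + 1) ≤ f i) → ∃ N, ∀ m, N ≤ m → f m = f N)
    (I : AddSubgroup G) (hI : IsOrderIdeal I) (hproper : I ≠ ⊤) :
    (∃ J₁ J₂ : AddSubgroup G, IsOrderIdeal J₁ ∧ IsOrderIdeal J₂ ∧
      I = J₁ ⊓ J₂ ∧ I < J₁ ∧ I < J₂) ∨
    (∃! I' : AddSubgroup G, IsOrderIdeal I' ∧ I < I' ∧
      ∀ J : AddSubgroup G, IsOrderIdeal J → I < J → I' ≤ J) := by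
  classical
  -- ⊤ is an ideal
  have htop : IsOrderIdeal (⊤ : AddSubgroup G) := by
    constructor
    · intro g h x _ _ _ _; trivial
    · intro x _
      obtain ⟨y, hxy, h0y⟩ := hdir x 0
      refine ⟨y, trivial, y - x, trivial, h0y, ?_, ?_⟩
      · have := hadd x y (-x) hxy
        simpa [sub_eq_add_neg] using this
      · abel
  set S : Set (AddSubgroup G) := {J | IsOrderIdeal J ∧ I < J} with hS
  have htopS : (⊤ : AddSubgroup G) ∈ S := ⟨htop, lt_of_le_of_ne le_top hproper⟩
  have hSne : S.Nonempty := ⟨⊤, htopS⟩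
  have hSle : ∀ J ∈ S, IsOrderIdeal J ∧ I ≤ J := fun J hJ => ⟨hJ.1, hJ.2.le⟩
  have hIdealInf : IsOrderIdeal (sInf S) := hInf S I hI hSne hSle
  have hIle : I ≤ sInf S := le_sInf fun J hJ => (hSle J hJ).2
  rcases eq_or_lt_of_le hIle with heq | hlt
  · -- sInf S = I : first alternative, by contradiction using DCC
    left
    by_contra hcon
    push_neg at hcon
    -- any two elements of S have meet in S
    have hmeet : ∀ J ∈ S, ∀ K ∈ S, J ⊓ K ∈ S := by
      intro J hJ K hK
      have hid : IsOrderIdeal (J ⊓ K) := by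
        have h2 : ∀ L ∈ ({J, K} : Set (AddSubgroup G)), IsOrderIdeal L ∧ I ≤ L := by
          rintro L (rfl | rfl)
          · exact hSle L hJ
          · exact hSle L hK
        have := hInf {J, K} I hI ⟨J, by simp⟩ h2
        rwa [sInf_pair] at this
      have hle : I ≤ J ⊓ K := le_inf hJ.2.le hK.2.le
      refine ⟨hid, lt_of_le_of_ne hle ?_⟩
      intro h
      exact (hcon J K hJ.1 hK.1 h hJ.2) hK.2
    -- step: every element of S has a strictly smaller element of S
    have hstep : ∀ J ∈ S, ∃ J' ∈ S, J' < J := by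
      intro J hJ
      obtain ⟨x, hxJ, hxI⟩ := SetLike.exists_of_lt hJ.2
      have hxInf : x ∉ sInf S := by rw [← heq]; exact hxI
      rw [AddSubgroup.mem_sInf] at hxInf
      push_neg at hxInf
      obtain ⟨K, hK, hxK⟩ := hxInf
      refine ⟨J ⊓ K, hmeet J hJ K hK, lt_of_le_not_ge inf_le_left ?_⟩
      intro hle
      exact hxK ((AddSubgroup.mem_inf.mp (hle hxJ)).2)
    -- build a strictly decreasing sequence
    let f : ℕ → {J // J ∈ S} := fun n =>
      Nat.rec ⟨⊤, htopS⟩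
        (fun _ p => ⟨(hstep p.1 p.2).choose, (hstep p.1 p.2).choose_spec.1⟩) n
    have hdec : ∀ n, (f (n + 1)).1 < (f n).1 := by
      intro n
      exact (hstep (f n).1 (f n).2).choose_spec.2
    obtain ⟨N, hN⟩ := hDCC (fun n => (f n).1) (fun n => (f n).2.1)
      (fun n => (hdec n).le)
    exact absurd (hN (N + 1) (Nat.le_succ N)) (hdec N).ne
  · -- sInf S is the minimum ideal properly containing I
    right
    refine ⟨sInf S, ⟨hIdealInf, hlt, fun J hJ hIJ => sInf_le ⟨hJ, hIJ⟩⟩, ?_⟩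
    rintro J ⟨hJid, hJlt, hJmin⟩
    exact le_antisymm (hJmin (sInf S) hIdealInf hlt) (sInf_le ⟨hJid, hJlt⟩)
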